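/- Let s ≥ 1, let X, X_1, …, X_m be i.i.d. ℝ^d-valued random variables in L^s(ℙ), and let α ⊂ ℝ^d be a finite nonempty set with maximal radius ρ(α) = max_{a∈α}|a|. Then ρ(α) ≥ E[ max_{k≤m} |X_k| ] − m^{1/s} · ( E[ min_{a∈α} |X − a|^s ] )^{1/s}. -/

import Mathlib

open MeasureTheory ProbabilityTheory Metric

/-- random quantization lower bound: for i.i.d. `X, X_1, …, X_m` in `L^s` (`s ≥ 1`)
and any finite quantizer `α`,
`ρ(α) ≥ E[max_{k≤m} |X_k|] − m^{1/s} (E[min_{a∈α}|X−a|^s])^{1/s}`.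
Here `X = X 0` and `X_k = X k.succ`. -/
theorem maximal_radius_random_quantization_lower_bound
    {Ω : Type*} [MeasurableSpace Ω] (μ : Measure Ω) [IsProbabilityMeasure μ]
    {E : Type*} [NormedAddCommGroup E] [NormedSpace ℝ E] [MeasurableSpace E] [BorelSpace E]
    (s : ℝ) (hs : 1 ≤ s) (m : ℕ) (hm : 0 < m)
    (X : Fin (m + 1) → Ω → E) (hmeas : ∀ i, Measurable (X i))
    (hindep : iIndepFun X μ)
    (hident : ∀ i j, Measure.map (X i) μ = Measure.map (X j) μ)
    (hmom : ∀ i, Integrable (fun ω => ‖X i ω‖ ^ s) μ)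
    (α : Finset E) (hαne : α.Nonempty)
    (hintdist : Integrable (fun ω => infDist (X 0 ω) ↑α ^ s) μ)
    (hne : (Finset.univ : Finset (Fin m)).Nonempty) :
    (∫ ω, (Finset.univ.sup' hne fun i : Fin m => ‖X i.succ ω‖) ∂μ)
        - (m : ℝ) ^ (1 / s) * (∫ ω, infDist (X 0 ω) ↑α ^ s ∂μ) ^ (1 / s)
      ≤ α.sup' hαne fun a => ‖a‖ := by
  classical
  have hs0 : (0:ℝ) < s := lt_of_lt_of_le one_pos hs
  set ρ : ℝ := α.sup' hαne fun a => ‖a‖ with hρdef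
  have hgcont : Continuous fun x : E => infDist x (↑α : Set E) := continuous_infDist_pt _
  have hgscont : Continuous fun x : E => infDist x (↑α : Set E) ^ s :=
    hgcont.rpow_const fun x => Or.inr (le_of_lt hs0)
  set d : Fin m → Ω → ℝ := fun k ω => infDist (X k.succ ω) (↑α : Set E) with hddef
  have hdmeas : ∀ k, Measurable (d k) := fun k => hgcont.measurable.comp (hmeas k.succ)
  have hdnn : ∀ k ω, 0 ≤ d k ω := fun k ω => infDist_nonneg
  set D : ℝ := ∫ ω, infDist (X 0 ω) ↑α ^ s ∂μ with hDdef
  have hDnn : 0 ≤ D := integral_nonneg fun ω => Real.rpow_nonneg infDist_nonneg s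
  -- identical distribution transfer
  have hDk : ∀ k : Fin m, Integrable (fun ω => d k ω ^ s) μ ∧ ∫ ω, d k ω ^ s ∂μ = D := by
    intro k
    have h1 : Integrable (fun x => infDist x (↑α : Set E) ^ s) (Measure.map (X k.succ) μ) := by
      rw [hident k.succ 0,
        integrable_map_measure hgscont.aestronglyMeasurable (hmeas 0).aemeasurable]
      exact hintdist
    refine ⟨(integrable_map_measure hgscont.aestronglyMeasurable
      (hmeas k.succ).aemeasurable).mp h1, ?_⟩
    rw [hDdef, ← integral_map (hmeas k.succ).aemeasurable hgscont.aestronglyMeasurable,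
      hident k.succ 0, integral_map (hmeas 0).aemeasurable hgscont.aestronglyMeasurable]
  -- integrability of norms
  have hkey : ∀ x : ℝ, 0 ≤ x → x ≤ 1 + x ^ s := by
    intro x hx
    rcases le_total x 1 with h | h
    · have : (0:ℝ) ≤ x ^ s := Real.rpow_nonneg hx s
      linarith
    · have h2 : x ^ (1:ℝ) ≤ x ^ s := Real.rpow_le_rpow_of_exponent_le h hs
      rw [Real.rpow_one] at h2
      linarith
  have hXnormint : ∀ i, Integrable (fun ω => ‖X i ω‖) μ := by
    intro i
    refine Integrable.mono' ((integrable_const (1:ℝ)).add (hmom i))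
      (hmeas i).norm.aestronglyMeasurable ?_
    filter_upwards with ω
    rw [norm_norm]
    exact hkey _ (norm_nonneg _)
  have hdint : ∀ k, Integrable (d k) μ := by
    intro k
    obtain ⟨a₀, ha₀⟩ := hαne
    refine Integrable.mono' ((hXnormint k.succ).add (integrable_const ‖a₀‖))
      (hdmeas k).aestronglyMeasurable ?_
    filter_upwards with ω
    rw [Real.norm_of_nonneg (hdnn k ω)]
    calc d k ω ≤ dist (X k.succ ω) a₀ := infDist_le_dist_of_mem (Finset.mem_coe.mpr ha₀)
      _ = ‖X k.succ ω - a₀‖ := dist_eq_norm _ _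
      _ ≤ ‖X k.succ ω‖ + ‖a₀‖ := norm_sub_le _ _
  -- the argmax partition
  set A : Fin m → Set Ω := fun k =>
    (⋂ j : Fin m, {ω | ‖X j.succ ω‖ ≤ ‖X k.succ ω‖}) ∩ ⋂ j : Fin m, ⋂ _ : j < k, {ω | ‖X j.succ ω‖ < ‖X k.succ ω‖}
    with hAdef
  have hAmeas : ∀ k, MeasurableSet (A k) := by
    intro k
    refine (MeasurableSet.iInter fun j : Fin m =>
        measurableSet_le (hmeas j.succ).norm (hmeas k.succ).norm).inter
      (MeasurableSet.iInter fun j : Fin m => MeasurableSet.iInter fun _ =>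
        measurableSet_lt (hmeas j.succ).norm (hmeas k.succ).norm)
  have hAmem : ∀ k ω, ω ∈ A k ↔
      (∀ j : Fin m, ‖X j.succ ω‖ ≤ ‖X k.succ ω‖) ∧ ∀ j : Fin m, j < k → ‖X j.succ ω‖ < ‖X k.succ ω‖ := by
    intro k ω
    simp [hAdef, Set.mem_iInter]
  have hpart : ∀ ω, ∃ k, ω ∈ A k ∧ ∀ k', ω ∈ A k' → k' = k := by
    intro ω
    set S : Finset (Fin m) := Finset.univ.filter fun i => ∀ j : Fin m, ‖X j.succ ω‖ ≤ ‖X i.succ ω‖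
      with hSdef
    have hSne : S.Nonempty := by
      obtain ⟨i, -, hi⟩ := Finset.exists_mem_eq_sup' hne fun i : Fin m => ‖X i.succ ω‖
      refine ⟨i, Finset.mem_filter.mpr ⟨Finset.mem_univ _, fun j => ?_⟩⟩
      rw [← hi]
      exact Finset.le_sup' (fun i : Fin m => ‖X i.succ ω‖) (Finset.mem_univ j)
    set k0 := S.min' hSne with hk0def
    have hk0max : ∀ j : Fin m, ‖X j.succ ω‖ ≤ ‖X k0.succ ω‖ :=
      (Finset.mem_filter.mp (S.min'_mem hSne)).2
    have hk0mem : ω ∈ A k0 := by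
      rw [hAmem]
      refine ⟨hk0max, fun j hj => ?_⟩
      rcases lt_or_ge ‖X j.succ ω‖ ‖X k0.succ ω‖ with h | h
      · exact h
      · exfalso
        have hjS : j ∈ S := Finset.mem_filter.mpr ⟨Finset.mem_univ _,
          fun i => le_trans (hk0max i) h⟩
        exact absurd (S.min'_le j hjS) (not_le.mpr hj)
    refine ⟨k0, hk0mem, fun k' hk' => ?_⟩
    rw [hAmem] at hk'
    by_contra hne'
    rcases lt_or_gt_of_ne hne' with h | h
    · exact absurd (hk'.1 k0) (not_le.mpr ((((hAmem k0 ω).mp hk0mem).2) k' h))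
    · exact absurd (((hAmem k0 ω).mp hk0mem).1 k') (not_le.mpr (hk'.2 k0 h))
  -- collapse of indicator sums
  have hcollapse : ∀ (h : Fin m → Ω → ℝ) (ω : Ω) (k0 : Fin m), ω ∈ A k0 →
      (∀ k', ω ∈ A k' → k' = k0) →
      ∑ k, (A k).indicator (h k) ω = h k0 ω := by
    intro h ω k0 hk0 huniq
    rw [Finset.sum_eq_single k0]
    · rw [Set.indicator_of_mem hk0]
    · intro b _ hb
      exact Set.indicator_of_notMem (fun hbA => hb (huniq b hbA)) _
    · simp
  set F : Ω → ℝ := fun ω => ∑ k, (A k).indicator (d k) ω with hFdef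
  set G : Ω → ℝ := fun ω => ∑ k, (A k).indicator (fun ω => d k ω ^ s) ω with hGdef
  have hFnn : ∀ ω, 0 ≤ F ω := fun ω =>
    Finset.sum_nonneg fun k _ => Set.indicator_nonneg (fun ω _ => hdnn k ω) ω
  have hFG : ∀ ω, F ω ^ s = G ω := by
    intro ω
    obtain ⟨k0, hk0, huniq⟩ := hpart ω
    rw [hFdef, hGdef]
    simp only
    rw [hcollapse d ω k0 hk0 huniq, hcollapse (fun k ω => d k ω ^ s) ω k0 hk0 huniq]
  have hFint : Integrable F μ :=
    integrable_finset_sum _ fun k _ => (hdint k).indicator (hAmeas k)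
  have hGint : Integrable G μ :=
    integrable_finset_sum _ fun k _ => (hDk k).1.indicator (hAmeas k)
  have hFmeas : Measurable F :=
    Finset.measurable_sum _ fun k _ => ((hdmeas k).indicator (hAmeas k))
  -- pointwise bound: max ≤ ρ + F
  have hMleF : ∀ ω, (Finset.univ.sup' hne fun i : Fin m => ‖X i.succ ω‖) ≤ ρ + F ω := by
    intro ω
    obtain ⟨k0, hk0, huniq⟩ := hpart ω
    have hF : F ω = d k0 ω := hcollapse d ω k0 hk0 huniq
    rw [hF]
    have hsup : (Finset.univ.sup' hne fun i : Fin m => ‖X i.succ ω‖) ≤ ‖X k0.succ ω‖ :=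
      Finset.sup'_le _ _ fun j _ => ((hAmem k0 ω).mp hk0).1 j
    obtain ⟨a, haα, hdist⟩ := (α.finite_toSet.isCompact).exists_infDist_eq_dist
      (Finset.coe_nonempty.mpr hαne) (X k0.succ ω)
    have haρ : ‖a‖ ≤ ρ := Finset.le_sup' _ (Finset.mem_coe.mp haα)
    have h1 : ‖X k0.succ ω‖ - ‖a‖ ≤ ‖X k0.succ ω - a‖ := norm_sub_norm_le _ _
    have h2 : d k0 ω = ‖X k0.succ ω - a‖ := by
      simp only [hddef]
      rw [hdist, dist_eq_norm]
    linarith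
  -- integrate the pointwise bound
  have hMmeas : Measurable fun ω => Finset.univ.sup' hne fun i : Fin m => ‖X i.succ ω‖ := by
    have := Finset.measurable_sup' hne (f := fun i : Fin m => fun ω => ‖X i.succ ω‖)
      (fun i _ => (hmeas i.succ).norm)
    convert this using 1
    ext ω
    rw [Finset.sup'_apply]
  have hMint : Integrable (fun ω => Finset.univ.sup' hne fun i : Fin m => ‖X i.succ ω‖) μ := by
    refine Integrable.mono' (integrable_finset_sum (f := fun (i : Fin m) ω => ‖X i.succ ω‖) Finset.univ fun i _ => hXnormint i.succ)
      hMmeas.aestronglyMeasurable ?_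
    filter_upwards with ω
    rw [Real.norm_of_nonneg (le_trans (norm_nonneg (X (hne.choose).succ ω))
      (Finset.le_sup' (fun i : Fin m => ‖X i.succ ω‖) (Finset.mem_univ hne.choose)))]
    exact Finset.sup'_le _ _ fun i _ =>
      Finset.single_le_sum (fun j _ => norm_nonneg (X j.succ ω)) (Finset.mem_univ i)
  have h1 : (∫ ω, (Finset.univ.sup' hne fun i : Fin m => ‖X i.succ ω‖) ∂μ) ≤ ρ + ∫ ω, F ω ∂μ := by
    have h := integral_mono hMint (integrable_const_add_iff.mpr hFint) hMleF
    rwa [integral_add (integrable_const ρ) hFint, integral_const, probReal_univ,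
      one_smul] at h
  -- Jensen: ∫F ≤ (∫F^s)^(1/s) = (∫G)^(1/s)
  have hintFG : ∫ ω, F ω ^ s ∂μ = ∫ ω, G ω ∂μ := integral_congr_ae
    (Filter.Eventually.of_forall hFG)
  have h2 : ∫ ω, F ω ∂μ ≤ (∫ ω, G ω ∂μ) ^ (1/s) := by
    rcases eq_or_lt_of_le hs with hs1 | hs1
    · rw [← hintFG, ← hs1]
      simp only [Real.rpow_one, div_one, one_div_one]
      norm_num
    · have hpq : Real.HolderConjugate s (s.conjExponent) := Real.HolderConjugate.conjExponent hs1
      have hFmem : MemLp F (ENNReal.ofReal s) μ := by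
        have hiff := memLp_norm_rpow_iff (μ := μ) (q := ENNReal.ofReal s) (p := ENNReal.ofReal s)
          hFmeas.aestronglyMeasurable (by simp [ENNReal.ofReal_eq_zero, not_le, hs0])
          ENNReal.ofReal_ne_top
        rw [ENNReal.div_self (by simp [ENNReal.ofReal_eq_zero, not_le, hs0])
          ENNReal.ofReal_ne_top] at hiff
        refine hiff.mp ?_
        rw [memLp_one_iff_integrable]
        have : (fun x => ‖F x‖ ^ (ENNReal.ofReal s).toReal) = G := by
          ext x
          rw [ENNReal.toReal_ofReal (le_of_lt hs0), Real.norm_of_nonneg (hFnn x), hFG]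
        rw [this]
        exact hGint
      have hone : MemLp (fun _ : Ω => (1:ℝ)) (ENNReal.ofReal s.conjExponent) μ := memLp_const 1
      have hH := integral_mul_le_Lp_mul_Lq_of_nonneg hpq
        (Filter.Eventually.of_forall hFnn)
        (Filter.Eventually.of_forall fun ω => zero_le_one) hFmem hone
      simp only [mul_one, Real.one_rpow] at hH
      rw [integral_const, probReal_univ, one_smul, Real.one_rpow,
        mul_one, hintFG] at hH
      exact hH
  -- ∫G ≤ m * D
  have h3 : ∫ ω, G ω ∂μ ≤ (m : ℝ) * D := by
    rw [hGdef, integral_finset_sum _ fun k _ => (hDk k).1.indicator (hAmeas k)]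
    calc ∑ k : Fin m, ∫ ω, (A k).indicator (fun ω => d k ω ^ s) ω ∂μ
        ≤ ∑ k : Fin m, ∫ ω, d k ω ^ s ∂μ := by
          refine Finset.sum_le_sum fun k _ => integral_mono ((hDk k).1.indicator (hAmeas k))
            (hDk k).1 fun ω => ?_
          exact Set.indicator_le_self' (fun ω _ => Real.rpow_nonneg (hdnn k ω) s) ω
      _ = ∑ _k : Fin m, D := by
          exact Finset.sum_congr rfl fun k _ => (hDk k).2
      _ = (m : ℝ) * D := by simp [mul_comm]
  have h4 : (∫ ω, G ω ∂μ) ^ (1/s) ≤ (m : ℝ) ^ (1/s) * D ^ (1/s) := by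
    have hGnn : 0 ≤ ∫ ω, G ω ∂μ := by
      rw [← hintFG]
      exact integral_nonneg fun ω => Real.rpow_nonneg (hFnn ω) s
    calc (∫ ω, G ω ∂μ) ^ (1/s) ≤ ((m : ℝ) * D) ^ (1/s) :=
          Real.rpow_le_rpow hGnn h3 (by positivity)
      _ = (m : ℝ) ^ (1/s) * D ^ (1/s) := Real.mul_rpow (Nat.cast_nonneg m) hDnn
  have h5 : ∫ ω, F ω ∂μ ≤ (m : ℝ) ^ (1/s) * D ^ (1/s) := le_trans h2 h4
  linarith
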